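/- The characteristic polynomial of the linearized second-neighbor atomistic difference scheme, -φ''_{2F} Λ² - φ''_F Λ + 2(φ''_F + φ''_{2F}) - φ''_F Λ^{-1} - φ''_{2F} Λ^{-2} = 0, has roots 1 (with multiplicity two), λ, and 1/λ, where λ = [(φ''_F + 2φ''_{2F}) + √((φ''_F)² + 4 φ''_F φ''_{2F})] / (-2 φ''_{2F}); moreover if φ''_F > 0, φ''_{2F} < 0, and φ''_F + 4φ''_{2F} > 0, then λ > 1. -/

import Mathlib

/-- The characteristic polynomial `-bΛ⁴ - aΛ³ + 2(a+b)Λ² - aΛ - b` of the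
linearized second-neighbor atomistic scheme (with `a = φ''_F`, `b = φ''_{2F}`)
factors with roots `1, 1, λ, 1/λ` where
`λ = ((a+2b) + √(a²+4ab))/(-2b)`, and `λ > 1` under the stated assumptions. -/
theorem characteristic_roots (a b : ℝ) (ha : 0 < a) (hb : b < 0) (hab : 0 < a + 4 * b)
    (lam : ℝ) (hlam : lam = ((a + 2 * b) + Real.sqrt (a ^ 2 + 4 * a * b)) / (-2 * b)) :
    0 < a ^ 2 + 4 * a * b ∧ 1 < lam ∧
      ∀ x : ℝ, -b * x ^ 4 - a * x ^ 3 + 2 * (a + b) * x ^ 2 - a * x - b =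
        -b * (x - 1) ^ 2 * (x - lam) * (x - 1 / lam) := by
  have hb' : (-2 : ℝ) * b > 0 := by linarith
  have hd : 0 < a ^ 2 + 4 * a * b := by nlinarith
  have hsq : Real.sqrt (a ^ 2 + 4 * a * b) ^ 2 = a ^ 2 + 4 * a * b :=
    Real.sq_sqrt hd.le
  have hs0 : 0 ≤ Real.sqrt (a ^ 2 + 4 * a * b) := Real.sqrt_nonneg _
  have hlam1 : 1 < lam := by
    rw [hlam, lt_div_iff₀ hb']
    nlinarith
  have hlam0 : lam ≠ 0 := by linarith
  have hq : b * lam ^ 2 + (a + 2 * b) * lam + b = 0 := by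
    have hb0 : b ≠ 0 := ne_of_lt hb
    rw [hlam]
    field_simp
    rw [show a * (a + b * 4) = a ^ 2 + 4 * a * b by ring]
    nlinarith [hsq]
  refine ⟨hd, hlam1, fun x => ?_⟩
  have h1 : x - 1 / lam = (lam * x - 1) / lam := by field_simp
  rw [h1, mul_div_assoc', eq_div_iff hlam0]
  linear_combination (-x * (x - 1) ^ 2) * hq
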